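/- (Lower bound direction of the query formula, distinct components) Let v1, v2 be vertices with P v1 = i, P v2 = j, and i ≠ j. Then for every walk π in G from v1 to v2 there exist b1 ∈ B(C_i) and b2 ∈ B(C_j) such that the length of π is at least dist_{C_i}(v1,b1) + dist_BG(b1,b2) + dist_{C_j}(b2,v2). -/

import Mathlib

open scoped ENNReal

namespace SPQ

variable {V : Type*} {ι : Type*}

/-- The length of a walk: the sum of the weights `w` over its consecutive edges. -/
noncomputable def wlen (w : V → V → ℝ≥0∞) {G : SimpleGraph V} {u v : V} (p : G.Walk u v) : ℝ≥0∞ :=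
  (p.darts.map fun d => w d.toProd.1 d.toProd.2).sum

/-- The shortest-path distance: infimum of lengths of all walks (⊤ if none exists). -/
noncomputable def gdist (G : SimpleGraph V) (w : V → V → ℝ≥0∞) (u v : V) : ℝ≥0∞ :=
  ⨅ p : G.Walk u v, wlen w p

/-- The component `C_i`: the subgraph of `G` induced on `P ⁻¹ {i}`
(as a graph on `V`: edges of `G` with both endpoints mapped to `i` by `P`). -/
def comp (G : SimpleGraph V) (P : V → ι) (i : ι) : SimpleGraph V where
  Adj u v := G.Adj u v ∧ P u = i ∧ P v = i
  symm := ⟨fun _ _ h => ⟨h.1.symm, h.2.2, h.2.1⟩⟩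
  loopless := ⟨fun u h => G.irrefl h.1⟩

/-- The boundary `B(C_i)`: vertices of component `i` having a `G`-neighbor
in a different component. -/
def bdry (G : SimpleGraph V) (P : V → ι) (i : ι) : Set V :=
  {v | P v = i ∧ ∃ u, G.Adj v u ∧ P u ≠ i}

/-- The set `B` of all boundary vertices. -/
def bdryAll (G : SimpleGraph V) (P : V → ι) : Set V :=
  ⋃ i, bdry G P i

/-- The boundary graph `BG`: distinct boundary vertices `b1, b2` are adjacent
iff `P b1 = P b2` or `G.Adj b1 b2`. -/
def BGraph (G : SimpleGraph V) (P : V → ι) : SimpleGraph V where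
  Adj b1 b2 := b1 ≠ b2 ∧ b1 ∈ bdryAll G P ∧ b2 ∈ bdryAll G P ∧ (P b1 = P b2 ∨ G.Adj b1 b2)
  symm := by
    constructor
    intro u v h
    refine ⟨h.1.symm, h.2.2.1, h.2.1, ?_⟩
    rcases h.2.2.2 with h' | h'
    · exact Or.inl h'.symm
    · exact Or.inr h'.symm
  loopless := ⟨fun u h => h.1 rfl⟩

open Classical in
/-- The edge weight of the boundary graph:
`wt b1 b2 = dist_{C_{P b1}}(b1, b2)` if `P b1 = P b2`, and `w b1 b2` otherwise. -/
noncomputable def wt (G : SimpleGraph V) (P : V → ι) (w : V → V → ℝ≥0∞) (b1 b2 : V) : ℝ≥0∞ :=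
  if P b1 = P b2 then gdist (comp G P (P b1)) w b1 b2 else w b1 b2

section Aux

variable {G : SimpleGraph V} {w : V → V → ℝ≥0∞} {u v x : V}

lemma wlen_nil : wlen w (SimpleGraph.Walk.nil : G.Walk u u) = 0 := by
  simp [wlen]

lemma wlen_cons (h : G.Adj u x) (p : G.Walk x v) :
    wlen w (p.cons h) = w u x + wlen w p := by
  simp [wlen]

lemma wlen_append (p : G.Walk u x) (q : G.Walk x v) :
    wlen w (p.append q) = wlen w p + wlen w q := by
  simp [wlen, SimpleGraph.Walk.darts_append]

lemma gdist_le (p : G.Walk u v) : gdist G w u v ≤ wlen w p :=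
  iInf_le _ p

lemma gdist_self : gdist G w u u = 0 :=
  le_antisymm ((gdist_le SimpleGraph.Walk.nil).trans_eq wlen_nil) zero_le

lemma gdist_triangle (x : V) : gdist G w u v ≤ gdist G w u x + gdist G w x v := by
  simp only [gdist]
  rw [ENNReal.iInf_add]
  refine le_iInf fun p => ?_
  rw [ENNReal.add_iInf]
  refine le_iInf fun q => ?_
  rw [← wlen_append]
  exact iInf_le _ _

lemma gdist_le_edge (h : G.Adj u v) : gdist G w u v ≤ w u v := by
  simpa [wlen_cons, wlen_nil] using gdist_le (w := w) (SimpleGraph.Walk.nil.cons h)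

variable {P : V → ι}

lemma mem_bdryAll {c : ι} (h : u ∈ bdry G P c) : u ∈ bdryAll G P :=
  Set.mem_iUnion.2 ⟨c, h⟩

lemma bgdist_le_cross (hu : u ∈ bdryAll G P) (hx : x ∈ bdryAll G P) (h : G.Adj u x) :
    gdist (BGraph G P) (wt G P w) u x ≤ w u x := by
  have hadj : (BGraph G P).Adj u x := ⟨h.ne, hu, hx, Or.inr h⟩
  refine (gdist_le_edge hadj).trans ?_
  unfold wt
  split_ifs with hP
  · exact gdist_le_edge ⟨h, rfl, hP.symm⟩
  · exact le_rfl

lemma bgdist_le_intra (hu : u ∈ bdryAll G P) (hx : x ∈ bdryAll G P) (hP : P u = P x) :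
    gdist (BGraph G P) (wt G P w) u x ≤ gdist (comp G P (P u)) w u x := by
  by_cases hux : u = x
  · subst hux; simp [gdist_self]
  · have hadj : (BGraph G P).Adj u x := ⟨hux, hu, hx, Or.inl hP⟩
    refine (gdist_le_edge hadj).trans ?_
    unfold wt
    rw [if_pos hP]

lemma key (j : ι) (v2 : V) (h2 : P v2 = j) :
    ∀ (u : V) (π : G.Walk u v2),
      (P u = j ∧ gdist (comp G P j) w u v2 ≤ wlen w π) ∨
      (∃ b1 ∈ bdry G P (P u), ∃ b2 ∈ bdry G P j,
        gdist (comp G P (P u)) w u b1 + gdist (BGraph G P) (wt G P w) b1 b2 +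
          gdist (comp G P j) w b2 v2 ≤ wlen w π) := by
  intro u π
  induction π with
  | nil => exact Or.inl ⟨h2, by simp [gdist_self, wlen_nil]⟩
  | @cons u x v2 h p ih =>
    rw [wlen_cons]
    by_cases hPux : P u = P x
    · rcases ih h2 with ⟨hxj, hle⟩ | ⟨b1, hb1, b2, hb2, hle⟩
      · refine Or.inl ⟨hPux.trans hxj, ?_⟩
        calc gdist (comp G P j) w u v2
            ≤ gdist (comp G P j) w u x + gdist (comp G P j) w x v2 := gdist_triangle x
          _ ≤ w u x + gdist (comp G P j) w x v2 :=
              add_le_add_left (gdist_le_edge (G := comp G P j) ⟨h, hPux.trans hxj, hxj⟩) _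
          _ ≤ w u x + wlen w p := add_le_add_right hle _
      · refine Or.inr ⟨b1, hPux ▸ hb1, b2, hb2, ?_⟩
        have h1 : gdist (comp G P (P u)) w u b1
            ≤ w u x + gdist (comp G P (P u)) w x b1 :=
          (gdist_triangle x).trans (add_le_add_left (gdist_le_edge (G := comp G P (P u)) ⟨h, rfl, hPux.symm⟩) _)
        calc gdist (comp G P (P u)) w u b1 + gdist (BGraph G P) (wt G P w) b1 b2 +
              gdist (comp G P j) w b2 v2
            ≤ (w u x + gdist (comp G P (P x)) w x b1) + gdist (BGraph G P) (wt G P w) b1 b2 +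
              gdist (comp G P j) w b2 v2 := by
              rw [hPux]; exact add_le_add_left (add_le_add_left (hPux ▸ h1) _) _
          _ = w u x + (gdist (comp G P (P x)) w x b1 + gdist (BGraph G P) (wt G P w) b1 b2 +
              gdist (comp G P j) w b2 v2) := by ring
          _ ≤ w u x + wlen w p := add_le_add_right hle _
    · have hu : u ∈ bdry G P (P u) := ⟨rfl, x, h, fun hc => hPux hc.symm⟩
      have hx : x ∈ bdry G P (P x) := ⟨rfl, u, h.symm, fun hc => hPux hc⟩
      have hua : u ∈ bdryAll G P := mem_bdryAll hu
      have hxa : x ∈ bdryAll G P := mem_bdryAll hx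
      have hux : gdist (BGraph G P) (wt G P w) u x ≤ w u x := bgdist_le_cross hua hxa h
      rcases ih h2 with ⟨hxj, hle⟩ | ⟨b1, hb1, b2, hb2, hle⟩
      · refine Or.inr ⟨u, hu, x, hxj ▸ hx, ?_⟩
        rw [gdist_self, zero_add]
        exact add_le_add hux hle
      · refine Or.inr ⟨u, hu, b2, hb2, ?_⟩
        rw [gdist_self, zero_add]
        have hb1a : b1 ∈ bdryAll G P := mem_bdryAll hb1
        have hxb1 : gdist (BGraph G P) (wt G P w) x b1
            ≤ gdist (comp G P (P x)) w x b1 := by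
          have := bgdist_le_intra (w := w) hxa hb1a hb1.1.symm
          exact this
        calc gdist (BGraph G P) (wt G P w) u b2 + gdist (comp G P j) w b2 v2
            ≤ (gdist (BGraph G P) (wt G P w) u x + gdist (BGraph G P) (wt G P w) x b1 +
                gdist (BGraph G P) (wt G P w) b1 b2) + gdist (comp G P j) w b2 v2 := by
              refine add_le_add_left ?_ _
              exact ((gdist_triangle x).trans (add_le_add_right (gdist_triangle b1) _)).trans
                (le_of_eq (add_assoc _ _ _).symm)
          _ ≤ (w u x + gdist (comp G P (P x)) w x b1 + gdist (BGraph G P) (wt G P w) b1 b2) +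
                gdist (comp G P j) w b2 v2 := by
              exact add_le_add_left (add_le_add (add_le_add hux hxb1) le_rfl) _
          _ = w u x + (gdist (comp G P (P x)) w x b1 + gdist (BGraph G P) (wt G P w) b1 b2 +
                gdist (comp G P j) w b2 v2) := by ring
          _ ≤ w u x + wlen w p := add_le_add_right hle _

end Aux

/-- Lower bound direction of the query formula, distinct components:
Let `v1, v2` be vertices with `P v1 = i`, `P v2 = j`, and `i ≠ j`. Then for every walk
`π` in `G` from `v1` to `v2` there exist `b1 ∈ B(C_i)` and `b2 ∈ B(C_j)` such that the
length of `π` is at least `dist_{C_i}(v1,b1) + dist_BG(b1,b2) + dist_{C_j}(b2,v2)`. -/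
theorem stmt12 {V : Type*} {ι : Type*} [Fintype V] [Fintype ι]
    (G : SimpleGraph V) (w : V → V → ℝ≥0∞)
    (hsymm : ∀ u v, w u v = w v u) (hfin : ∀ u v, G.Adj u v → w u v < ⊤)
    (P : V → ι) (i j : ι) (v1 v2 : V) (h1 : P v1 = i) (h2 : P v2 = j) (hij : i ≠ j)
    (π : G.Walk v1 v2) :
    ∃ b1 ∈ bdry G P i, ∃ b2 ∈ bdry G P j,
      gdist (comp G P i) w v1 b1 + gdist (BGraph G P) (wt G P w) b1 b2 +
        gdist (comp G P j) w b2 v2 ≤ wlen w π := by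
  subst h1 h2
  rcases key (P v2) v2 rfl v1 π with ⟨hj, _⟩ | ⟨b1, hb1, b2, hb2, hle⟩
  · exact absurd hj hij
  · exact ⟨b1, hb1, b2, hb2, hle⟩

end SPQ
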